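/- arXiv:1801.09767 — 2 statements merged into one kernel-verified Lean document; each statement's English description precedes it below -/
import Mathlib

section
/- Let H be a real Hilbert space, (e_i)_{i∈ℕ} a Hilbert basis of H, (λ_i)_{i∈ℕ} positive real numbers, and w ∈ H. Suppose there exists α₀ > 0 such that ∑_i λ_i^{α₀} ⟨w, e_i⟩² < ∞. Then for every α ∈ (0, α₀] the series w_α := ∑_i λ_i^{α/2} ⟨w, e_i⟩ e_i converges in H, and ‖w_α − w‖ → 0 as α → 0⁺. -/
open scoped InnerProductSpace

/-- If `∑ᵢ λᵢ^{α₀} ⟨w, eᵢ⟩² < ∞` for some `α₀ > 0`, then for every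
`α ∈ (0, α₀]` the spectral power series `w_α = ∑ᵢ λᵢ^{α/2} ⟨w, eᵢ⟩ eᵢ`
converges in `H`, and `‖w_α − w‖ → 0` as `α → 0⁺`. -/
theorem spectral_power_tendsto_identity_as_order_tendsto_zero
    {H : Type*} [NormedAddCommGroup H] [InnerProductSpace ℝ H] [CompleteSpace H]
    (e : HilbertBasis ℕ ℝ H) (lam : ℕ → ℝ) (hlam : ∀ i, 0 < lam i)
    (w : H) (α₀ : ℝ) (hα₀ : 0 < α₀)
    (hsum : Summable (fun i => lam i ^ α₀ * ⟪w, e i⟫_ℝ ^ 2)) :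
    (∀ α : ℝ, 0 < α → α ≤ α₀ →
      Summable (fun i => (lam i ^ (α / 2) * ⟪w, e i⟫_ℝ) • e i)) ∧
    Filter.Tendsto
      (fun α : ℝ => ‖(∑' i, (lam i ^ (α / 2) * ⟪w, e i⟫_ℝ) • e i) - w‖)
      (nhdsWithin 0 (Set.Ioi 0)) (nhds 0) := by
  classical
  set c : ℕ → ℝ := fun i => ⟪w, e i⟫_ℝ with hc
  -- Bessel / Parseval: the coefficients are square-summable
  have hc2 : Summable (fun i => c i ^ 2) := by
    have := e.summable_inner_mul_inner w w
    refine this.congr fun i => ?_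
    simp [hc, real_inner_comm (e i) w, sq]
  -- pointwise bound on powers of lam
  have hpow_le : ∀ (α : ℝ), 0 ≤ α → α ≤ α₀ → ∀ i, lam i ^ α ≤ lam i ^ α₀ + 1 := by
    intro α hα hαα₀ i
    rcases le_or_gt 1 (lam i) with h1 | h1
    · have := Real.rpow_le_rpow_of_exponent_le h1 hαα₀
      have h0 : (0:ℝ) ≤ lam i ^ α₀ := Real.rpow_nonneg (hlam i).le _
      linarith
    · have h2 : lam i ^ α ≤ 1 := Real.rpow_le_one (hlam i).le h1.le hα
      have h0 : (0:ℝ) ≤ lam i ^ α₀ := Real.rpow_nonneg (hlam i).le _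
      linarith
  have hbound_summable : Summable (fun i => (lam i ^ α₀ + 1) * c i ^ 2) := by
    have := hsum.add hc2
    refine this.congr fun i => ?_
    ring
  -- square of rpow
  have hsq : ∀ (α : ℝ) (i : ℕ), (lam i ^ (α / 2)) ^ 2 = lam i ^ α := by
    intro α i
    rw [← Real.rpow_natCast (lam i ^ (α / 2)) 2, ← Real.rpow_mul (hlam i).le]
    norm_num
  -- square-summability of the coefficients of w_α
  have hsumsq : ∀ (α : ℝ), 0 < α → α ≤ α₀ →
      Summable (fun i => (lam i ^ (α / 2) * c i) ^ 2) := by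
    intro α hα hαα₀
    refine Summable.of_nonneg_of_le (fun i => by positivity)
      (fun i => ?_) hbound_summable
    have h1 : (lam i ^ (α / 2) * c i) ^ 2 = lam i ^ α * c i ^ 2 := by
      rw [mul_pow, hsq]
    rw [h1]
    have := hpow_le α hα.le hαα₀ i
    nlinarith [sq_nonneg (c i)]
  -- the lp element of coefficients, and the HasSum statement
  have key : ∀ (α : ℝ), 0 < α → α ≤ α₀ →
      ∃ x : H, HasSum (fun i => (lam i ^ (α / 2) * c i) • e i) x ∧
        (∀ i, ⟪e i, x⟫_ℝ = lam i ^ (α / 2) * c i) := by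
    intro α hα hαα₀
    have hmem : Memℓp (fun i => lam i ^ (α / 2) * c i) 2 := by
      apply memℓp_gen
      refine (hsumsq α hα hαα₀).congr fun i => ?_
      rw [Real.norm_eq_abs,
        show ((2 : ENNReal).toReal) = ((2 : ℕ) : ℝ) by norm_num,
        Real.rpow_natCast, sq_abs]
    set f : lp (fun _ : ℕ => ℝ) 2 := ⟨fun i => lam i ^ (α / 2) * c i, hmem⟩ with hf
    refine ⟨e.repr.symm f, e.hasSum_repr_symm f, fun i => ?_⟩
    have := e.repr_apply_apply (e.repr.symm f) i
    rw [LinearIsometryEquiv.apply_symm_apply] at this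
    rw [← this]
  constructor
  · intro α hα hαα₀
    obtain ⟨x, hx, -⟩ := key α hα hαα₀
    exact hx.summable
  -- the tendsto part
  · -- squared distance as a sum
    have hdist : ∀ (α : ℝ), 0 < α → α ≤ α₀ →
        ‖(∑' i, (lam i ^ (α / 2) * c i) • e i) - w‖
          = Real.sqrt (∑' i, ((lam i ^ (α / 2) - 1) * c i) ^ 2) := by
      intro α hα hαα₀
      obtain ⟨x, hx, hxi⟩ := key α hα hαα₀
      rw [hx.tsum_eq]
      have hinner : ∀ i, ⟪e i, x - w⟫_ℝ = (lam i ^ (α / 2) - 1) * c i := by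
        intro i
        rw [inner_sub_right, hxi i, real_inner_comm]
        simp only [hc]
        ring
      have hpar : ⟪x - w, x - w⟫_ℝ = ∑' i, ((lam i ^ (α / 2) - 1) * c i) ^ 2 := by
        rw [← e.tsum_inner_mul_inner (x - w) (x - w)]
        refine tsum_congr fun i => ?_
        have h := hinner i
        rw [real_inner_comm] at h
        rw [hinner i, h, sq]
      rw [← Real.sqrt_sq (norm_nonneg (x - w)), ← real_inner_self_eq_norm_sq, hpar]
    -- eventually in the filter, α ∈ (0, α₀]
    have hev : ∀ᶠ α in nhdsWithin (0:ℝ) (Set.Ioi 0), 0 < α ∧ α ≤ α₀ := by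
      filter_upwards [Filter.inter_mem (nhdsWithin_le_nhds
        (Iio_mem_nhds hα₀ : Set.Iio α₀ ∈ nhds (0:ℝ))) self_mem_nhdsWithin] with α hα
      exact ⟨hα.2, le_of_lt hα.1⟩
    -- dominated convergence: the squared sums tend to 0
    have hG : Filter.Tendsto
        (fun α : ℝ => ∑' i, ((lam i ^ (α / 2) - 1) * c i) ^ 2)
        (nhdsWithin 0 (Set.Ioi 0)) (nhds 0) := by
      have hmain := tendsto_tsum_of_dominated_convergence
        (𝓕 := nhdsWithin (0:ℝ) (Set.Ioi 0))
        (f := fun (α : ℝ) (i : ℕ) => ((lam i ^ (α / 2) - 1) * c i) ^ 2)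
        (g := fun _ : ℕ => (0:ℝ))
        (bound := fun i => (lam i ^ α₀ + 2) * c i ^ 2) ?_ ?_ ?_
      · simpa using hmain
      · refine (hbound_summable.add hc2).congr fun i => ?_
        ring
      · intro i
        have h1 : Filter.Tendsto (fun α : ℝ => lam i ^ (α / 2))
            (nhdsWithin 0 (Set.Ioi 0)) (nhds 1) := by
          have hct : ContinuousAt (fun y : ℝ => lam i ^ y) 0 :=
            Real.continuousAt_const_rpow (hlam i).ne'
          have h2 : Filter.Tendsto (fun α : ℝ => α / 2)
              (nhdsWithin 0 (Set.Ioi 0)) (nhds 0) := by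
            have := (continuous_id.div_const (2:ℝ)).tendsto (0:ℝ)
            simpa using this.mono_left nhdsWithin_le_nhds
          have := hct.tendsto.comp h2
          simpa [Real.rpow_zero, Function.comp_def] using this
        have h3 : Filter.Tendsto (fun α : ℝ => ((lam i ^ (α / 2) - 1) * c i) ^ 2)
            (nhdsWithin 0 (Set.Ioi 0)) (nhds (((1 - 1) * c i) ^ 2)) := by
          exact (((h1.sub tendsto_const_nhds).mul tendsto_const_nhds).pow 2)
        simpa using h3
      · filter_upwards [hev] with α hα
        intro i
        obtain ⟨hα1, hα2⟩ := hα
        have hle := hpow_le α hα1.le hα2 i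
        have hpos : 0 < lam i ^ (α / 2) := Real.rpow_pos_of_pos (hlam i) _
        have hsq' := hsq α i
        rw [Real.norm_eq_abs, abs_of_nonneg (sq_nonneg _)]
        nlinarith [sq_nonneg (c i), sq_nonneg (lam i ^ (α / 2) * c i),
          mul_pos hpos hpos]
      -- end dominated convergence
    -- combine
    have hsqrt : Filter.Tendsto
        (fun α : ℝ => Real.sqrt (∑' i, ((lam i ^ (α / 2) - 1) * c i) ^ 2))
        (nhdsWithin 0 (Set.Ioi 0)) (nhds 0) := by
      have := (Real.continuous_sqrt.tendsto 0).comp hG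
      simpa [Function.comp_def] using this
    refine hsqrt.congr' ?_
    filter_upwards [hev] with α hα
    exact (hdist α hα.1 hα.2).symm
end

section
/- For every α ∈ (0,2) and every ε > 0, the series ∑_{k=1}^∞ (1+k²)^{α+ε} · k^{−2α} / (k · log²(k+1)) diverges to infinity. (Equivalently, with a_k = 1/(√k log(k+1)), the solution u = ∑_k k^{−α} a_k sin(kx) of the zero-Dirichlet spectral fractional Poisson problem does not lie in H^{α+ε} for any ε > 0; together with its membership in H^α this shows the α-gain in Sobolev regularity for the spectral fractional Laplacian is sharp.) -/
open Real Filter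

private lemma key_term_bound (δ α ε : ℝ) (hδ0 : 0 < δ) (hδh : δ ≤ 1/2)
    (hδε : δ ≤ ε) (hα0 : 0 < α) (x : ℝ) (hx : 1 ≤ x) :
    δ^2/32 * x ^ (3*δ/2 - 1) ≤
      (1 + x ^ 2) ^ (α + ε) * x ^ (-(2 * α)) / (x * Real.log (x + 1) ^ 2) := by
  have hx0 : (0:ℝ) < x := by linarith
  -- numerator bound
  have hnum : x ^ (2*δ) ≤ (1 + x ^ 2) ^ (α + ε) * x ^ (-(2 * α)) := by
    have h1 : x ^ (2*(α+δ)) ≤ (1 + x ^ 2) ^ (α + ε) := by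
      have e1 : x ^ (2*(α+δ)) = (x ^ 2) ^ (α+δ) := by
        rw [← Real.rpow_natCast x 2, ← Real.rpow_mul hx0.le]
        norm_num
      rw [e1]
      calc (x ^ 2) ^ (α+δ) ≤ (1 + x ^ 2) ^ (α+δ) :=
            Real.rpow_le_rpow (by positivity) (by linarith) (by linarith)
        _ ≤ (1 + x ^ 2) ^ (α+ε) :=
            Real.rpow_le_rpow_of_exponent_le (by nlinarith) (by linarith)
    have e2 : x ^ (2*δ) = x ^ (2*(α+δ)) * x ^ (-(2*α)) := by
      rw [← Real.rpow_add hx0]; ring_nf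
    rw [e2]
    exact mul_le_mul_of_nonneg_right h1 (Real.rpow_nonneg hx0.le _)
  -- denominator bound
  have hden : x * Real.log (x + 1) ^ 2 ≤ 32/δ^2 * x ^ (1 + δ/2) := by
    have hlog0 : 0 ≤ Real.log (x+1) := Real.log_nonneg (by linarith)
    have hlog : Real.log (x+1) ≤ (x+1) ^ (δ/4) / (δ/4) :=
      Real.log_le_rpow_div (by linarith) (by linarith)
    have h2 : Real.log (x+1) ^ 2 ≤ ((x+1) ^ (δ/4) / (δ/4)) ^ 2 :=
      pow_le_pow_left₀ hlog0 hlog 2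
    have h3 : ((x+1) ^ (δ/4)) ^ 2 = (x+1) ^ (δ/2) := by
      rw [← Real.rpow_natCast ((x+1) ^ (δ/4)) 2, ← Real.rpow_mul (by linarith)]
      congr 1; ring
    have h4 : (x+1) ^ (δ/2) ≤ 2 * x ^ (δ/2) := by
      calc (x+1) ^ (δ/2) ≤ (2*x) ^ (δ/2) :=
            Real.rpow_le_rpow (by linarith) (by linarith) (by linarith)
        _ = 2 ^ (δ/2) * x ^ (δ/2) := Real.mul_rpow (by norm_num) hx0.le
        _ ≤ 2 ^ (1:ℝ) * x ^ (δ/2) := by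
            have := Real.rpow_le_rpow_of_exponent_le (x := 2) (by norm_num)
              (show δ/2 ≤ 1 by linarith)
            exact mul_le_mul_of_nonneg_right this (Real.rpow_nonneg hx0.le _)
        _ = 2 * x ^ (δ/2) := by rw [Real.rpow_one]
    have h5 : Real.log (x+1) ^ 2 ≤ 32/δ^2 * x ^ (δ/2) := by
      have e : ((x+1) ^ (δ/4) / (δ/4)) ^ 2 = ((x+1) ^ (δ/4)) ^ 2 / (δ^2/16) := by
        rw [div_pow]; ring_nf
      rw [e, h3] at h2
      calc Real.log (x+1) ^ 2 ≤ (x+1) ^ (δ/2) / (δ^2/16) := h2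
        _ ≤ (2 * x ^ (δ/2)) / (δ^2/16) := by gcongr
        _ = 32/δ^2 * x ^ (δ/2) := by field_simp; ring
    calc x * Real.log (x+1) ^ 2 ≤ x * (32/δ^2 * x ^ (δ/2)) := by
          exact mul_le_mul_of_nonneg_left h5 hx0.le
      _ = 32/δ^2 * x ^ (1 + δ/2) := by
          rw [Real.rpow_add hx0, Real.rpow_one]; ring
  -- combine
  have hDpos : 0 < x * Real.log (x+1) ^ 2 := by
    have : 0 < Real.log (x+1) := Real.log_pos (by linarith)
    positivity
  have hfinal : x ^ (2*δ) / (32/δ^2 * x ^ (1 + δ/2)) ≤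
      (1 + x ^ 2) ^ (α + ε) * x ^ (-(2 * α)) / (x * Real.log (x + 1) ^ 2) :=
    div_le_div₀ (by positivity) hnum hDpos hden
  have heq : δ^2/32 * x ^ (3*δ/2 - 1) = x ^ (2*δ) / (32/δ^2 * x ^ (1 + δ/2)) := by
    have e : x ^ (2*δ) = x ^ (3*δ/2 - 1) * x ^ (1 + δ/2) := by
      rw [← Real.rpow_add hx0]; ring_nf
    rw [e]
    have hxp : (0:ℝ) < x ^ (1 + δ/2) := Real.rpow_pos_of_pos hx0 _
    field_simp
  rw [heq]; exact hfinal

/-- For every `α ∈ (0,2)` and `ε > 0`, the series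
`∑_{k≥1} (1+k²)^{α+ε} k^{−2α} / (k log²(k+1))` diverges to infinity;
i.e. the solution `u = ∑_k k^{−α} a_k sin(kx)` of the zero-Dirichlet
spectral fractional Poisson problem lies in no `H^{α+ε}`, so the α-gain
in Sobolev regularity is sharp. -/
theorem spectral_fractional_poisson_solution_not_in_H_alpha_plus_eps
    (α : ℝ) (hα : α ∈ Set.Ioo (0 : ℝ) 2) (ε : ℝ) (hε : 0 < ε) :
    Filter.Tendsto
      (fun N : ℕ => ∑ k ∈ Finset.Icc 1 N,
        (1 + (k : ℝ) ^ 2) ^ (α + ε) * (k : ℝ) ^ (-(2 * α)) /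
          ((k : ℝ) * Real.log ((k : ℝ) + 1) ^ 2))
      Filter.atTop Filter.atTop := by
  obtain ⟨hα0, hα2⟩ := hα
  set δ := min ε (1/2) with hδdef
  have hδ0 : 0 < δ := lt_min hε (by norm_num)
  have hδε : δ ≤ ε := min_le_left _ _
  have hδh : δ ≤ 1/2 := min_le_right _ _
  have htend : Tendsto (fun N : ℕ => δ^2/32 * (N:ℝ) ^ (3*δ/2)) atTop atTop := by
    apply Tendsto.const_mul_atTop (by positivity)
    exact (tendsto_rpow_atTop (by linarith)).comp tendsto_natCast_atTop_atTop
  apply tendsto_atTop_mono' _ _ htend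
  filter_upwards [eventually_ge_atTop 1] with N hN
  have hN0 : (0:ℝ) < N := by exact_mod_cast hN
  have hbound : ∀ k ∈ Finset.Icc 1 N,
      δ^2/32 * (N:ℝ) ^ (3*δ/2 - 1) ≤
        (1 + (k : ℝ) ^ 2) ^ (α + ε) * (k : ℝ) ^ (-(2 * α)) /
          ((k : ℝ) * Real.log ((k : ℝ) + 1) ^ 2) := by
    intro k hk
    rw [Finset.mem_Icc] at hk
    have hk1 : (1:ℝ) ≤ k := by exact_mod_cast hk.1
    have hkN : (k:ℝ) ≤ N := by exact_mod_cast hk.2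
    have h1 : (N:ℝ) ^ (3*δ/2 - 1) ≤ (k:ℝ) ^ (3*δ/2 - 1) :=
      Real.rpow_le_rpow_of_nonpos (by linarith) hkN (by linarith)
    calc δ^2/32 * (N:ℝ) ^ (3*δ/2 - 1) ≤ δ^2/32 * (k:ℝ) ^ (3*δ/2 - 1) := by
          exact mul_le_mul_of_nonneg_left h1 (by positivity)
      _ ≤ _ := key_term_bound δ α ε hδ0 hδh hδε hα0 _ hk1
  have hsum := Finset.card_nsmul_le_sum _ _ _ hbound
  rw [Nat.card_Icc] at hsum
  simp only [nsmul_eq_mul, Nat.add_sub_cancel] at hsum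
  calc δ^2/32 * (N:ℝ) ^ (3*δ/2)
      = (N:ℝ) * (δ^2/32 * (N:ℝ) ^ (3*δ/2 - 1)) := by
        rw [show 3*δ/2 = 1 + (3*δ/2 - 1) by ring, Real.rpow_add hN0, Real.rpow_one]
        ring
    _ ≤ _ := hsum
end
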